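/- Let G be a group and let H be a subgroup of G which has finite height and infinite index in G. Let 𝒜 be a nonempty collection of infinite subgroups of G such that: (i) 𝒜 is closed under conjugation by elements of G; (ii) for every A ∈ 𝒜, every subgroup of A which has finite height in A is either finite or of finite index in A; (iii) for any A, A' ∈ 𝒜 there is a finite chain A = A_0, A_1, …, A_m = A' of members of 𝒜 with A_i ∩ A_{i+1} infinite for every 0 ≤ i ≤ m−1. Then H ∩ A is finite for every A ∈ 𝒜. -/

import Mathlib

open Pointwise

/-- A subgroup `H` of `G` has height at most `n`: for any `n+1` pairwise distinct left
cosets `g₀H, …, gₙH`, the intersection `g₀Hg₀⁻¹ ∩ … ∩ gₙHgₙ⁻¹` is finite. -/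
def HeightLE {G : Type*} [Group G] (H : Subgroup G) (n : ℕ) : Prop :=
  ∀ g : Fin (n + 1) → G,
    (∀ i j, i ≠ j → g i • (H : Set G) ≠ g j • (H : Set G)) →
    (⋂ i, (fun x => g i * x * (g i)⁻¹) '' (H : Set G)).Finite

/-- `H` has finite height in `G` if it has height at most `n` for some `n`. -/
def HasFiniteHeight {G : Type*} [Group G] (H : Subgroup G) : Prop :=
  ∃ n : ℕ, HeightLE H n

/-- If `B` is infinite and `H` has finite relative index in `B`, then `H ⊓ B` is infinite. -/
lemma aux_inf_infinite {G : Type*} [Group G] (H B : Subgroup G)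
    (hB : (B : Set G).Infinite) (h : H.relIndex B ≠ 0) :
    ((H ⊓ B : Subgroup G) : Set G).Infinite := by
  intro hfin
  haveI : Finite ↥(H ⊓ B) := hfin.to_subtype
  haveI : Finite ((H ⊓ B).subgroupOf B) :=
    Finite.of_equiv _ (Subgroup.subgroupOfEquivOfLe (inf_le_right : H ⊓ B ≤ B)).symm.toEquiv
  have hidx : ((H ⊓ B).subgroupOf B).index ≠ 0 := by
    have : (H ⊓ B).relIndex B = H.relIndex B := Subgroup.inf_relIndex_right H B
    rw [Subgroup.relIndex] at this
    rw [this]; exact h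
  haveI : Finite (B ⧸ (H ⊓ B).subgroupOf B) := by
    rw [Subgroup.index] at hidx
    exact Nat.finite_of_card_ne_zero hidx
  haveI : Finite B :=
    Finite.of_equiv _ (Subgroup.groupEquivQuotientProdSubgroup (s := (H ⊓ B).subgroupOf B)).symm
  exact hB (B : Set G).toFinite

/-- Finite height passes to the induced subgroup of any subgroup. -/
lemma aux_height {G : Type*} [Group G] (H A : Subgroup G)
    (hH : HasFiniteHeight H) : HasFiniteHeight (H.subgroupOf A) := by
  obtain ⟨n, hn⟩ := hH
  refine ⟨n, fun g hg => ?_⟩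
  have hg' : ∀ i j, i ≠ j →
      ((g i : G)) • (H : Set G) ≠ ((g j : G)) • (H : Set G) := by
    intro i j hij hEq
    apply hg i j hij
    rw [leftCoset_eq_iff] at hEq ⊢
    rw [Subgroup.mem_subgroupOf]
    push_cast
    exact hEq
  have hfin := hn (fun i => (g i : G)) hg'
  have hsub : (⋂ i, (fun x => g i * x * (g i)⁻¹) '' ((H.subgroupOf A) : Set A)) ⊆
      Subtype.val ⁻¹' (⋂ i, (fun x => (g i : G) * x * ((g i : G))⁻¹) '' (H : Set G)) := by
    intro x hx
    simp only [Set.mem_iInter, Set.mem_image, Set.mem_preimage] at hx ⊢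
    intro i
    obtain ⟨k, hk, hkx⟩ := hx i
    refine ⟨(k : G), Subgroup.mem_subgroupOf.mp hk, ?_⟩
    rw [← hkx]
    push_cast
    rfl
  exact (hfin.preimage Subtype.val_injective.injOn).subset hsub

/-- Let `H ≤ G` have finite height and infinite index, and let `𝒜` be a nonempty collection of
infinite subgroups of `G` which is closed under conjugation, such that each finite-height
subgroup of a member of `𝒜` is finite or of finite index, and such that any two members of `𝒜`
are connected by a chain of members with consecutive infinite intersections.
Then `H ∩ A` is finite for every `A ∈ 𝒜`. -/
theorem inter_finite_of_finiteHeight_infiniteIndex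
    {G : Type*} [Group G] (H : Subgroup G)
    (hH : HasFiniteHeight H) (hHindex : H.index = 0)
    (𝒜 : Set (Subgroup G)) (hne : 𝒜.Nonempty)
    (hinf : ∀ A ∈ 𝒜, (A : Set G).Infinite)
    (hconj : ∀ A ∈ 𝒜, ∀ g : G, A.map (MulAut.conj g).toMonoidHom ∈ 𝒜)
    (hfh : ∀ A ∈ 𝒜, ∀ K : Subgroup A, HasFiniteHeight K → (K : Set A).Finite ∨ K.index ≠ 0)
    (hchain : ∀ A ∈ 𝒜, ∀ A' ∈ 𝒜, ∃ m : ℕ, ∃ c : Fin (m + 1) → Subgroup G,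
      c 0 = A ∧ c (Fin.last m) = A' ∧ (∀ i, c i ∈ 𝒜) ∧
      ∀ i : Fin m, ((c i.castSucc ⊓ c i.succ : Subgroup G) : Set G).Infinite) :
    ∀ A ∈ 𝒜, ((H ⊓ A : Subgroup G) : Set G).Finite := by
  obtain ⟨n, hn⟩ := hH
  -- Key: if `H ⊓ A` is infinite then `H` has finite relative index in `A`.
  have key : ∀ A ∈ 𝒜, ((H ⊓ A : Subgroup G) : Set G).Infinite → H.relIndex A ≠ 0 := by
    intro A hA hinfA
    rcases hfh A hA (H.subgroupOf A) (aux_height H A ⟨n, hn⟩) with hfin | hne0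
    · exfalso
      apply hinfA
      have heq : ((H ⊓ A : Subgroup G) : Set G) =
          Subtype.val '' ((H.subgroupOf A : Set A)) := by
        ext x
        simp only [Subgroup.coe_inf, Set.mem_inter_iff, SetLike.mem_coe, Set.mem_image,
          Subgroup.mem_subgroupOf]
        constructor
        · rintro ⟨hxH, hxA⟩
          exact ⟨⟨x, hxA⟩, hxH, rfl⟩
        · rintro ⟨⟨y, hy⟩, hyH, rfl⟩
          exact ⟨hyH, hy⟩
      rw [heq]
      exact hfin.image _
    · exact hne0
  intro A hA
  by_contra hfin
  have hinfHA : ((H ⊓ A : Subgroup G) : Set G).Infinite := hfin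
  -- Propagate along chains: `H ⊓ A'` is infinite for every `A' ∈ 𝒜`.
  have step : ∀ A₁ ∈ 𝒜, ∀ A₂ ∈ 𝒜, ((H ⊓ A₁ : Subgroup G) : Set G).Infinite →
      ((A₁ ⊓ A₂ : Subgroup G) : Set G).Infinite →
      ((H ⊓ A₂ : Subgroup G) : Set G).Infinite := by
    intro A₁ hA₁ A₂ hA₂ h1 h12
    have hr1 : H.relIndex A₁ ≠ 0 := key A₁ hA₁ h1
    have hr2 : H.relIndex (A₁ ⊓ A₂) ≠ 0 := fun h0 =>
      hr1 (Subgroup.relIndex_eq_zero_of_le_right (inf_le_left : A₁ ⊓ A₂ ≤ A₁) h0)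
    have h3 := aux_inf_infinite H (A₁ ⊓ A₂) h12 hr2
    refine h3.mono ?_
    have hle : H ⊓ (A₁ ⊓ A₂) ≤ H ⊓ A₂ := le_inf inf_le_left (inf_le_right.trans inf_le_right)
    exact hle
  have hall : ∀ A' ∈ 𝒜, ((H ⊓ A' : Subgroup G) : Set G).Infinite := by
    intro A' hA'
    obtain ⟨m, c, hc0, hclast, hcmem, hcint⟩ := hchain A hA A' hA'
    have hind : ∀ i : Fin (m + 1), ((H ⊓ c i : Subgroup G) : Set G).Infinite := by
      intro i
      induction i using Fin.induction with
      | zero => rw [hc0]; exact hinfHA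
      | succ i ih =>
        exact step (c i.castSucc) (hcmem _) (c i.succ) (hcmem _) ih (hcint i)
    rw [← hclast]
    exact hind _
  have hrel : ∀ A' ∈ 𝒜, H.relIndex A' ≠ 0 := fun A' h => key A' h (hall A' h)
  -- Get `n + 1` pairwise distinct cosets of `H`.
  haveI hquot : Infinite (G ⧸ H) := by
    have hzero := hHindex
    rw [Subgroup.index, Nat.card_eq_zero] at hzero
    rcases hzero with h | h
    · exact (h.elim (QuotientGroup.mk (1 : G)))
    · exact h
  set e := Infinite.natEmbedding (G ⧸ H) with he
  set g : Fin (n + 1) → G := fun i => (e i.val).out with hg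
  have hgdist : ∀ i j, i ≠ j → g i • (H : Set G) ≠ g j • (H : Set G) := by
    intro i j hij hEq
    rw [leftCoset_eq_iff] at hEq
    have h1 : (e i.val) = (e j.val) := by
      rw [← QuotientGroup.out_eq' (e i.val), ← QuotientGroup.out_eq' (e j.val)]
      exact QuotientGroup.eq.mpr hEq
    exact hij (Fin.val_injective (e.injective h1))
  -- Each conjugate of `H` has finite relative index in `A`.
  have hconjrel : ∀ i : Fin (n + 1),
      (H.map (MulAut.conj (g i)).toMonoidHom).relIndex A ≠ 0 := by
    intro i
    have hmap : H.map (MulAut.conj (g i)).toMonoidHom =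
        H.comap (MulAut.conj (g i)).symm.toMonoidHom :=
      Subgroup.map_equiv_eq_comap_symm' _ _
    rw [hmap, Subgroup.relIndex_comap]
    have hAeq : A.map (MulAut.conj ((g i)⁻¹)).toMonoidHom =
        A.map (MulAut.conj (g i)).symm.toMonoidHom := by
      rw [map_inv, MulAut.inv_def]
    rw [← hAeq]
    exact hrel _ (hconj A hA (g i)⁻¹)
  have hiInf : (⨅ i, H.map (MulAut.conj (g i)).toMonoidHom).relIndex A ≠ 0 :=
    Subgroup.relIndex_iInf_ne_zero hconjrel
  have hiInfInf := aux_inf_infinite _ A (hinf A hA) hiInf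
  have hbig : (⋂ i, (fun x => g i * x * (g i)⁻¹) '' (H : Set G)).Infinite := by
    refine hiInfInf.mono ?_
    intro x hx
    have hx' : x ∈ (⨅ i, H.map (MulAut.conj (g i)).toMonoidHom) := hx.1
    rw [Subgroup.mem_iInf] at hx'
    rw [Set.mem_iInter]
    intro i
    have := hx' i
    rw [Subgroup.mem_map] at this
    obtain ⟨y, hy, hyx⟩ := this
    exact ⟨y, hy, by simpa [MulAut.conj_apply] using hyx⟩
  exact hbig (hn g hgdist)
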